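/- Let H be obtained from a tree with at least two vertices by attaching loops at some vertices. Then there exists a path in H containing two different leaves of H and at most one branch vertex of H. -/

import Mathlib

structure LoopGraph (V : Type) [Fintype V] [DecidableEq V] where
  N : V → Finset V
  symm : ∀ u v, u ∈ N v ↔ v ∈ N u

namespace LoopGraph

variable {V : Type} [Fintype V] [DecidableEq V]

/-- Indicator vector of a finite set of vertices, as a configuration over `F_2`. -/
def chi (S : Finset V) : V → ZMod 2 := fun u => if u ∈ S then 1 else 0

/-- One regular move of the sigma-game. -/
def RegStep (G : LoopGraph V) (x y : V → ZMod 2) : Prop :=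
  ∃ v, y = x + chi (G.N v)

/-- One valid move of the lit-only sigma-game. -/
def ValidStep (G : LoopGraph V) (x y : V → ZMod 2) : Prop :=
  ∃ v, x v = 1 ∧ y = x + chi (G.N v)

def RegReach (G : LoopGraph V) : (V → ZMod 2) → (V → ZMod 2) → Prop :=
  Relation.ReflTransGen G.RegStep

def ValidReach (G : LoopGraph V) : (V → ZMod 2) → (V → ZMod 2) → Prop :=
  Relation.ReflTransGen G.ValidStep

/-- The light number of a configuration. -/
def L (x : V → ZMod 2) : ℕ := (Finset.univ.filter fun v => x v = 1).card

/-- Minimum light number of a configuration for the sigma-game. -/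
noncomputable def ML (G : LoopGraph V) (x : V → ZMod 2) : ℕ :=
  sInf (L '' {y | G.RegReach x y})

/-- Minimum light number of a configuration for the lit-only sigma-game. -/
noncomputable def MLs (G : LoopGraph V) (x : V → ZMod 2) : ℕ :=
  sInf (L '' {y | G.ValidReach x y})

/-- Minimum light number of the sigma-game on `G`. -/
noncomputable def MLmax (G : LoopGraph V) : ℕ := ⨆ x, G.ML x

/-- Minimum light number of the lit-only sigma-game on `G`. -/
noncomputable def MLsmax (G : LoopGraph V) : ℕ := ⨆ x, G.MLs x

/-- Non-loop adjacency. -/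
def Adj (G : LoopGraph V) (u w : V) : Prop := u ≠ w ∧ w ∈ G.N u

def Connected (G : LoopGraph V) : Prop :=
  ∀ u w : V, Relation.ReflTransGen G.Adj u w

/-- Degree, counting non-loop edges only. -/
def deg (G : LoopGraph V) (v : V) : ℕ := ((G.N v).erase v).card

/-- Underlying simple graph (loops discarded). -/
def simple (G : LoopGraph V) : SimpleGraph V where
  Adj := G.Adj
  symm := by
    constructor
    intro u w h
    exact ⟨h.1.symm, (G.symm w u).mp h.2⟩
  loopless := by constructor; intro u h; exact h.1 rfl

/-- Induced subgraph on a finite vertex subset. -/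
def induce (G : LoopGraph V) (T : Finset V) : LoopGraph {u // u ∈ T} where
  N u := Finset.univ.filter fun w => w.val ∈ G.N u.val
  symm := by
    intro u w
    simp only [Finset.mem_filter, Finset.mem_univ, true_and]
    exact G.symm u.1 w.1

end LoopGraph
namespace LoopGraph
variable {V : Type} [Fintype V] [DecidableEq V] {G : LoopGraph V}

lemma adj_iff_mem_erase {z y : V} : G.simple.Adj z y ↔ y ∈ (G.N z).erase z := by
  constructor
  · rintro ⟨h1, h2⟩; exact Finset.mem_erase.mpr ⟨Ne.symm h1, h2⟩
  · intro h
    obtain ⟨h1, h2⟩ := Finset.mem_erase.mp h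
    exact ⟨Ne.symm h1, h2⟩

lemma eq_penult (htree : G.simple.IsTree) {x z y : V}
    (p : G.simple.Walk x z) (hp : p.IsPath) (hy : y ∈ p.support)
    (ha : G.simple.Adj z y) : y = p.reverse.getVert 1 := by
  have hq : (p.dropUntil y hy).IsPath := hp.dropUntil hy
  have h1 : (SimpleGraph.Walk.cons ha SimpleGraph.Walk.nil).IsPath := by
    simp [SimpleGraph.Walk.cons_isPath_iff, ha.ne]
  have he : (p.dropUntil y hy).reverse = SimpleGraph.Walk.cons ha SimpleGraph.Walk.nil :=
    (htree.existsUnique_path z y).unique hq.reverse h1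
  have h2 : p.reverse
      = (SimpleGraph.Walk.cons ha SimpleGraph.Walk.nil).append (p.takeUntil y hy).reverse := by
    conv_lhs => rw [← SimpleGraph.Walk.take_spec p hy]
    rw [SimpleGraph.Walk.reverse_append, he]
  rw [h2, SimpleGraph.Walk.getVert_append]
  simp

lemma isPath_concat {x z y : V} {p : G.simple.Walk x z}
    (hp : p.IsPath) (h : G.simple.Adj z y) (hy : y ∉ p.support) :
    (p.concat h).IsPath := by
  rw [← SimpleGraph.Walk.isPath_reverse_iff, SimpleGraph.Walk.reverse_concat]
  exact hp.reverse.cons (by rwa [SimpleGraph.Walk.support_reverse, List.mem_reverse])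

lemma extend_to_leaf (htree : G.simple.IsTree) :
    ∀ (k : ℕ) {x z : V} (p : G.simple.Walk x z), p.IsPath → 1 ≤ p.length →
      Fintype.card V ≤ p.length + k →
      ∃ (w : V) (r : G.simple.Walk z w), (p.append r).IsPath ∧ G.deg w = 1 := by
  intro k
  induction k with
  | zero =>
    intro x z p hp hlen hcard
    exact absurd hp.length_lt (by omega)
  | succ k ih =>
    intro x z p hp hlen hcard
    by_cases hdeg : G.deg z = 1
    · exact ⟨z, SimpleGraph.Walk.nil, by simpa using hp, hdeg⟩
    · have hadj0 : G.simple.Adj z (p.reverse.getVert 1) := by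
        have h0 : 0 < p.reverse.length := by
          rw [SimpleGraph.Walk.length_reverse]; omega
        have := p.reverse.adj_getVert_succ h0
        simpa using this
      have h1 : 0 < ((G.N z).erase z).card :=
        Finset.card_pos.mpr ⟨_, adj_iff_mem_erase.mp hadj0⟩
      have h2 : 1 < ((G.N z).erase z).card := by
        have : G.deg z ≠ 1 := hdeg
        unfold deg at this
        omega
      obtain ⟨y, hy, hyne⟩ := Finset.exists_mem_ne h2 (p.reverse.getVert 1)
      have hadj : G.simple.Adj z y := adj_iff_mem_erase.mpr hy
      have hns : y ∉ p.support := fun hmem => hyne (eq_penult htree p hp hmem hadj)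
      have hp' : (p.concat hadj).IsPath := isPath_concat hp hadj hns
      obtain ⟨w, r, hr, hw⟩ := ih (p.concat hadj) hp'
        (by rw [SimpleGraph.Walk.length_concat]; omega)
        (by rw [SimpleGraph.Walk.length_concat]; omega)
      refine ⟨w, (SimpleGraph.Walk.cons hadj SimpleGraph.Walk.nil).append r, ?_, hw⟩
      rwa [SimpleGraph.Walk.append_assoc, ← SimpleGraph.Walk.concat_eq_append]

lemma aux_prefix {G' : SimpleGraph V} {v₀ b w z : V} (p : G'.Walk v₀ b) (T : G'.Walk b w)
    (hQ : (p.append T).IsPath) (hz : z ∈ T.support) (hzb : z ≠ b) :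
    (p.append (T.takeUntil z hz)).IsPath ∧ 1 ≤ (T.takeUntil z hz).length := by
  constructor
  · have hs := SimpleGraph.Walk.take_spec T hz
    rw [← hs, SimpleGraph.Walk.append_assoc] at hQ
    exact hQ.of_append_left
  · by_contra h
    have h0 : (T.takeUntil z hz).length = 0 := by omega
    exact hzb (SimpleGraph.Walk.eq_of_length_eq_zero h0).symm

lemma takeUntil_cons' {G' : SimpleGraph V} {b c w z : V} (h : G'.Adj b c) (q : G'.Walk c w)
    (hz : z ∈ (SimpleGraph.Walk.cons h q).support) (hzb : z ≠ b) :
    ∃ hz' : z ∈ q.support,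
      (SimpleGraph.Walk.cons h q).takeUntil z hz
        = SimpleGraph.Walk.cons h (q.takeUntil z hz') := by
  have hz' : z ∈ q.support := by
    have hm := hz
    rw [SimpleGraph.Walk.support_cons, List.mem_cons] at hm
    rcases hm with h' | h'
    · exact absurd h' hzb
    · exact h'
  refine ⟨hz', ?_⟩
  rw [SimpleGraph.Walk.takeUntil]
  simp [Ne.symm hzb]

end LoopGraph

open LoopGraph in
theorem tree_path_through_two_leaves_at_most_one_branch
    {V : Type} [Fintype V] [DecidableEq V] (G : LoopGraph V)
    (htree : G.simple.IsTree) (hcard : 2 ≤ Fintype.card V) :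
    ∃ (u w : V) (p : G.simple.Walk u w), p.IsPath ∧ u ≠ w ∧
      G.deg u = 1 ∧ G.deg w = 1 ∧
      (p.support.toFinset.filter fun v => 3 ≤ G.deg v).card ≤ 1 := by
  classical
  have hu := htree.existsUnique_path
  have hV : Nonempty V := Fintype.card_pos_iff.mp (by omega)
  obtain ⟨v₀⟩ := hV
  by_cases hB : ∃ b, 3 ≤ G.deg b
  · choose P hP hPu using fun z => hu v₀ z
    obtain ⟨b, hbB, hmax⟩ := Finset.exists_max_image
      (Finset.univ.filter fun b => 3 ≤ G.deg b) (fun z => (P z).length)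
      (by obtain ⟨b, hb⟩ := hB; exact ⟨b, by simp [hb]⟩)
    have hb : 3 ≤ G.deg b := (Finset.mem_filter.mp hbB).2
    have hmax' : ∀ z, 3 ≤ G.deg z → (P z).length ≤ (P b).length := fun z hz =>
      hmax z (by simp [hz])
    obtain ⟨c₁, c₂, hc₁, hc₂, hc12, hc₁y, hc₂y⟩ :
        ∃ c₁ c₂, G.simple.Adj b c₁ ∧ G.simple.Adj b c₂ ∧ c₁ ≠ c₂ ∧
          c₁ ≠ (P b).reverse.getVert 1 ∧ c₂ ≠ (P b).reverse.getVert 1 := by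
      have h3 : 2 < ((G.N b).erase b).card := hb
      obtain ⟨a₁, ha₁, a₂, ha₂, a₃, ha₃, h12, h13, h23⟩ := Finset.two_lt_card.mp h3
      by_cases e1 : a₁ = (P b).reverse.getVert 1
      · exact ⟨a₂, a₃, adj_iff_mem_erase.mpr ha₂, adj_iff_mem_erase.mpr ha₃, h23,
          fun h => h12 (e1.trans h.symm), fun h => h13 (e1.trans h.symm)⟩
      · by_cases e2 : a₂ = (P b).reverse.getVert 1
        · exact ⟨a₁, a₃, adj_iff_mem_erase.mpr ha₁, adj_iff_mem_erase.mpr ha₃, h13,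
            e1, fun h => h23 (e2.trans h.symm)⟩
        · exact ⟨a₁, a₂, adj_iff_mem_erase.mpr ha₁, adj_iff_mem_erase.mpr ha₂, h12, e1, e2⟩
    have hmem₁ : c₁ ∉ (P b).support := fun hmem =>
      hc₁y (eq_penult htree (P b) (hP b) hmem hc₁)
    have hmem₂ : c₂ ∉ (P b).support := fun hmem =>
      hc₂y (eq_penult htree (P b) (hP b) hmem hc₂)
    obtain ⟨w₁, r₁, hr₁, hw₁⟩ := extend_to_leaf htree (Fintype.card V)
      ((P b).concat hc₁) (isPath_concat (hP b) hc₁ hmem₁)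
      (by rw [SimpleGraph.Walk.length_concat]; omega)
      (by rw [SimpleGraph.Walk.length_concat]; omega)
    obtain ⟨w₂, r₂, hr₂, hw₂⟩ := extend_to_leaf htree (Fintype.card V)
      ((P b).concat hc₂) (isPath_concat (hP b) hc₂ hmem₂)
      (by rw [SimpleGraph.Walk.length_concat]; omega)
      (by rw [SimpleGraph.Walk.length_concat]; omega)
    have hQQ₁ : ((P b).append (SimpleGraph.Walk.cons hc₁ r₁)).IsPath := by
      rw [← SimpleGraph.Walk.concat_append]; exact hr₁
    have hQQ₂ : ((P b).append (SimpleGraph.Walk.cons hc₂ r₂)).IsPath := by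
      rw [← SimpleGraph.Walk.concat_append]; exact hr₂
    have claim1 : ∀ {c w : V} (hadj : G.simple.Adj b c) (r : G.simple.Walk c w),
        ((P b).append (SimpleGraph.Walk.cons hadj r)).IsPath →
        ∀ z (hz : z ∈ (SimpleGraph.Walk.cons hadj r).support), z ≠ b →
          (P b).length < (P z).length ∧
          P z = (P b).append ((SimpleGraph.Walk.cons hadj r).takeUntil z hz) := by
      intro c w hadj r hQQ z hz hzb
      obtain ⟨hpath, hlen⟩ := aux_prefix (P b) _ hQQ hz hzb
      have he := hPu z _ hpath
      refine ⟨?_, he.symm⟩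
      rw [← he, SimpleGraph.Walk.length_append]
      omega
    have hdisj : ∀ z, z ∈ (SimpleGraph.Walk.cons hc₁ r₁).support →
        z ∈ (SimpleGraph.Walk.cons hc₂ r₂).support → z = b := by
      intro z h1 h2
      by_contra hzb
      obtain ⟨hz1, ht1⟩ := takeUntil_cons' hc₁ r₁ h1 hzb
      obtain ⟨hz2, ht2⟩ := takeUntil_cons' hc₂ r₂ h2 hzb
      have E := (claim1 hc₁ r₁ hQQ₁ z h1 hzb).2.symm.trans (claim1 hc₂ r₂ hQQ₂ z h2 hzb).2
      rw [ht1, ht2] at E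
      have E2 := congrArg (fun q => SimpleGraph.Walk.getVert q ((P b).length + 1)) E
      simp only [SimpleGraph.Walk.getVert_append] at E2
      rw [if_neg (by omega), if_neg (by omega), Nat.add_sub_cancel_left] at E2
      rw [SimpleGraph.Walk.getVert_cons _ _ one_ne_zero, SimpleGraph.Walk.getVert_cons _ _ one_ne_zero,
        Nat.sub_self, SimpleGraph.Walk.getVert_zero, SimpleGraph.Walk.getVert_zero] at E2
      exact hc12 E2
    have hT₁ : (SimpleGraph.Walk.cons hc₁ r₁).IsPath := hQQ₁.of_append_right
    have hT₂ : (SimpleGraph.Walk.cons hc₂ r₂).IsPath := hQQ₂.of_append_right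
    have hr₂p := (SimpleGraph.Walk.cons_isPath_iff hc₂ r₂).mp hT₂
    refine ⟨w₁, w₂,
      (SimpleGraph.Walk.cons hc₁ r₁).reverse.append (SimpleGraph.Walk.cons hc₂ r₂),
      ?_, ?_, hw₁, hw₂, ?_⟩
    · rw [SimpleGraph.Walk.isPath_def, SimpleGraph.Walk.support_append]
      have htail : (SimpleGraph.Walk.cons hc₂ r₂).support.tail = r₂.support := by
        rw [SimpleGraph.Walk.support_cons]
        rfl
      rw [htail]
      refine List.Nodup.append ?_ hr₂p.1.support_nodup ?_
      · rw [SimpleGraph.Walk.support_reverse]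
        exact List.nodup_reverse.mpr hT₁.support_nodup
      · intro a ha hb'
        rw [SimpleGraph.Walk.support_reverse, List.mem_reverse] at ha
        have hab := hdisj a ha
          (by rw [SimpleGraph.Walk.support_cons]; exact List.mem_cons_of_mem _ hb')
        exact hr₂p.2 (hab ▸ hb')
    · intro h
      have h1 : w₁ ∈ (SimpleGraph.Walk.cons hc₁ r₁).support :=
        SimpleGraph.Walk.end_mem_support _
      have h2 : w₁ ∈ (SimpleGraph.Walk.cons hc₂ r₂).support := by
        rw [h]; exact SimpleGraph.Walk.end_mem_support _
      have hb' := hdisj w₁ h1 h2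
      rw [hb'] at hw₁
      omega
    · refine le_trans (Finset.card_le_card (?_ : _ ⊆ ({b} : Finset V))) (by simp)
      intro a ha
      rw [Finset.mem_filter, List.mem_toFinset, SimpleGraph.Walk.mem_support_append_iff] at ha
      obtain ⟨hmem, hdeg3⟩ := ha
      rw [Finset.mem_singleton]
      by_contra hab
      rcases hmem with hm | hm
      · rw [SimpleGraph.Walk.support_reverse, List.mem_reverse] at hm
        have hlt := (claim1 hc₁ r₁ hQQ₁ a hm hab).1
        have hle := hmax' a hdeg3
        omega
      · have hlt := (claim1 hc₂ r₂ hQQ₂ a hm hab).1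
        have hle := hmax' a hdeg3
        omega
  · push_neg at hB
    obtain ⟨u', hne'⟩ := Fintype.exists_ne_of_one_lt_card (by omega) v₀
    obtain ⟨p₀⟩ := htree.isConnected.preconnected v₀ u'
    have hlen0 : 0 < p₀.length := by
      rcases Nat.eq_zero_or_pos p₀.length with h | h
      · exact absurd (SimpleGraph.Walk.eq_of_length_eq_zero h) (Ne.symm hne')
      · exact h
    have hadj : G.simple.Adj v₀ (p₀.getVert 1) := by
      simpa using p₀.adj_getVert_succ hlen0
    have hp1 : (SimpleGraph.Walk.cons hadj SimpleGraph.Walk.nil).IsPath := by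
      simp [SimpleGraph.Walk.cons_isPath_iff, hadj.ne]
    obtain ⟨w₁, r, hr, hw₁⟩ := extend_to_leaf htree (Fintype.card V)
      (SimpleGraph.Walk.cons hadj SimpleGraph.Walk.nil) hp1 (by simp) (by simp)
    obtain ⟨w₂, r₂, hr₂, hw₂⟩ := extend_to_leaf htree (Fintype.card V)
      ((SimpleGraph.Walk.cons hadj SimpleGraph.Walk.nil).append r).reverse hr.reverse
      (by rw [SimpleGraph.Walk.length_reverse, SimpleGraph.Walk.length_append]; simp)
      (by rw [SimpleGraph.Walk.length_reverse]; omega)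
    refine ⟨w₁, w₂, _, hr₂, ?_, hw₁, hw₂, ?_⟩
    · intro h
      subst h
      have hnil := SimpleGraph.Walk.isPath_iff_eq_nil.mp hr₂
      have hl := congrArg SimpleGraph.Walk.length hnil
      rw [SimpleGraph.Walk.length_append, SimpleGraph.Walk.length_reverse,
        SimpleGraph.Walk.length_append] at hl
      simp at hl
    · have : ((((SimpleGraph.Walk.cons hadj SimpleGraph.Walk.nil).append r).reverse.append
          r₂).support.toFinset.filter fun v => 3 ≤ G.deg v) = ∅ :=
        Finset.filter_eq_empty_iff.mpr (fun v _ => by have := hB v; omega)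
      rw [this]
      simp
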